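/- Let p be an odd prime, r = p^m, q = r², let 1 ≤ l ≤ m and d = gcd(l, m). Then for every even integer k with 2 ≤ k ≤ p^d, the number k·p^l belongs to Σ(g, q). -/

import Mathlib

open Finset

/-- Δ_S(a) = ∏_{b ∈ S, b ≠ a} (a − b). -/
def deltaS {F : Type*} [Field F] [DecidableEq F] (S : Finset F) (a : F) : F :=
  ∏ b ∈ S.erase a, (a - b)

/-- n ∈ Σ(g,q): n is even, n ≥ 2, and there is S ⊆ F_q with |S| = n such that
the quadratic-character values η_q(Δ_S(a)) agree for all a ∈ S
(equivalently, the Δ_S(a) are all squares or all nonsquares). -/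
def SigmaG (F : Type*) [Field F] [DecidableEq F] (n : ℕ) : Prop :=
  Even n ∧ 2 ≤ n ∧ ∃ S : Finset F, S.card = n ∧
    ((∀ a ∈ S, IsSquare (deltaS S a)) ∨ (∀ a ∈ S, ¬ IsSquare (deltaS S a)))

private lemma isSquare_mul_sq_iff {F : Type*} [Field F] {C w : F} (hw : w ≠ 0) :
    IsSquare (C * (w * w)) ↔ IsSquare C := by
  constructor
  · rintro ⟨v, hv⟩
    refine ⟨v * w⁻¹, ?_⟩
    field_simp
    linear_combination hv
  · rintro ⟨v, hv⟩
    exact ⟨v * w, by rw [hv]; ring⟩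

private lemma construction {F : Type*} [Field F] [Fintype F] [DecidableEq F]
    (K H U : Finset F) (t : F)
    (hK1 : (1:F) ∈ K)
    (hKsub : ∀ x ∈ K, ∀ y ∈ K, x - y ∈ K)
    (hKmul : ∀ x ∈ K, ∀ y ∈ K, x * y ∈ K)
    (hKinv : ∀ x ∈ K, x⁻¹ ∈ K)
    (hKpow : ∀ x ∈ K, x ^ H.card = x)
    (hKsq : ∀ x ∈ K, x ≠ 0 → IsSquare x)
    (hH0 : (0:F) ∈ H)
    (hHsub : ∀ x ∈ H, ∀ y ∈ H, x - y ∈ H)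
    (hHsmul : ∀ x ∈ K, ∀ h ∈ H, x * h ∈ H)
    (ht : t ∉ H)
    (hUK : U ⊆ K) :
    ∃ S : Finset F, S.card = U.card * H.card ∧
      ((∀ a ∈ S, IsSquare (deltaS S a)) ∨ (∀ a ∈ S, ¬ IsSquare (deltaS S a))) := by
  classical
  have hHneg : ∀ x ∈ H, -x ∈ H := fun x hx => by
    simpa using hHsub 0 hH0 x hx
  have hHadd : ∀ x ∈ H, ∀ y ∈ H, x + y ∈ H := fun x hx y hy => by
    simpa using hHsub x hx (-y) (hHneg y hy)
  -- the cosets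
  set f : F → Finset F := fun u => H.image (fun h => u * t + h) with hf
  set S : Finset F := U.biUnion f with hS
  have hmemf : ∀ u a, a ∈ f u ↔ ∃ h ∈ H, u * t + h = a := by
    intro u a; simp only [hf, Finset.mem_image]
  -- difference of reps not in H
  have hrep : ∀ u ∈ U, ∀ u' ∈ U, u ≠ u' → ∀ x, (u - u') * t + x ∈ H → x ∈ H → False := by
    intro u hu u' hu' hne x hx hxH
    have hw : u - u' ∈ K := hKsub u (hUK hu) u' (hUK hu')
    have hwne : u - u' ≠ 0 := sub_ne_zero.mpr hne
    have h1 : (u - u') * t ∈ H := by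
      have := hHsub _ hx x hxH; simpa using this
    have h2 : (u - u')⁻¹ * ((u - u') * t) ∈ H := hHsmul _ (hKinv _ hw) _ h1
    rw [inv_mul_cancel_left₀ hwne] at h2
    exact ht h2
  have hdisj : ∀ u ∈ U, ∀ u' ∈ U, u ≠ u' → Disjoint (f u) (f u') := by
    intro u hu u' hu' hne
    rw [Finset.disjoint_left]
    intro a ha ha'
    rw [hmemf] at ha ha'
    obtain ⟨h, hh, rfl⟩ := ha
    obtain ⟨h', hh', heq⟩ := ha'
    apply hrep u hu u' hu' hne (h - h')
    · have : (u - u') * t + (h - h') = 0 := by linear_combination -heq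
      rw [this]; exact hH0
    · exact hHsub h hh h' hh'
  have hcardf : ∀ u, (f u).card = H.card := by
    intro u
    exact Finset.card_image_of_injective _ (fun a b hab => by simpa using hab)
  have hScard : S.card = U.card * H.card := by
    rw [hS, Finset.card_biUnion (fun u hu v hv hne => hdisj u hu v hv hne)]
    simp [hcardf, Finset.sum_const, mul_comm]
  refine ⟨S, hScard, ?_⟩
  -- the key constants
  set π : F := ∏ x ∈ H.erase 0, x with hπ
  set c : F := ∏ h ∈ H, (t - h) with hc
  have hcne : c ≠ 0 := by
    rw [hc, Finset.prod_ne_zero_iff]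
    intro h hh hth
    exact ht (by rwa [sub_eq_zero.mp hth] )
  have hπne : π ≠ 0 := by
    rw [hπ, Finset.prod_ne_zero_iff]
    intro x hx
    simp only [Finset.mem_erase] at hx
    exact hx.1
  -- invariance of L under translation by H and scaling by K
  have hLshift : ∀ x : F, ∀ h ∈ H, (∏ h' ∈ H, (x + h - h')) = ∏ h' ∈ H, (x - h') := by
    intro x h hh
    refine Finset.prod_nbij' (fun h' => h' - h) (fun h' => h' + h) ?_ ?_ ?_ ?_ ?_
    · intro h' hh'; exact hHsub h' hh' h hh
    · intro h' hh'; exact hHadd h' hh' h hh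
    · intro h' hh'; ring
    · intro h' hh'; ring
    · intro h' hh'; ring
  have hLscale : ∀ w ∈ K, w ≠ 0 → (∏ h' ∈ H, (w * t - h')) = w * c := by
    intro w hw hwne
    have : (∏ h' ∈ H, (w * t - h')) = ∏ h' ∈ H, (w * t - w * h') := by
      refine Finset.prod_nbij' (fun h' => w⁻¹ * h') (fun h' => w * h') ?_ ?_ ?_ ?_ ?_
      · intro h' hh'; exact hHsmul _ (hKinv _ hw) _ hh'
      · intro h' hh'; exact hHsmul _ hw _ hh'
      · intro h' hh'; field_simp
      · intro h' hh'; field_simp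
      · intro h' hh'; rw [mul_inv_cancel_left₀ hwne]
    rw [this]
    have : ∀ h' ∈ H, w * t - w * h' = w * (t - h') := fun h' _ => by ring
    rw [Finset.prod_congr rfl this, Finset.prod_mul_distrib, Finset.prod_const, hKpow w hw, hc]
  -- main formula
  have hmain : ∀ u ∈ U, ∀ h ∈ H,
      deltaS S (u * t + h) = (π * c ^ (U.card - 1)) * (∏ u' ∈ U.erase u, (u - u')) := by
    intro u hu h hh
    have ha : u * t + h ∈ f u := (hmemf u _).mpr ⟨h, hh, rfl⟩
    set a := u * t + h with hadef
    have hsplit : S = f u ∪ (U.erase u).biUnion f := by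
      conv_lhs => rw [hS, ← Finset.insert_erase hu, Finset.biUnion_insert]
    have hanotin : a ∉ (U.erase u).biUnion f := by
      intro hmem
      rw [Finset.mem_biUnion] at hmem
      obtain ⟨u', hu', ha'⟩ := hmem
      rw [Finset.mem_erase] at hu'
      exact (Finset.disjoint_left.mp (hdisj u hu u' hu'.2 (Ne.symm hu'.1)) ha) ha'
    have herase : S.erase a = (f u).erase a ∪ (U.erase u).biUnion f := by
      rw [hsplit, Finset.erase_union_distrib, Finset.erase_eq_of_notMem hanotin]
    have hdisj2 : Disjoint ((f u).erase a) ((U.erase u).biUnion f) := by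
      rw [Finset.disjoint_left]
      intro b hb hb'
      rw [Finset.mem_biUnion] at hb'
      obtain ⟨u', hu', hb'⟩ := hb'
      rw [Finset.mem_erase] at hu'
      exact (Finset.disjoint_left.mp (hdisj u hu u' hu'.2 (Ne.symm hu'.1))
        (Finset.mem_of_mem_erase hb)) hb'
    rw [deltaS, herase, Finset.prod_union hdisj2]
    -- first factor equals π
    have h1 : (∏ b ∈ (f u).erase a, (a - b)) = π := by
      have himg : (f u).erase a = (H.erase h).image (fun h' => u * t + h') := by
        rw [hf]
        exact (Finset.image_erase (fun x y hxy => by simpa using hxy) H h).symm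
      rw [himg, Finset.prod_image (fun x _ y _ hxy => by simpa using hxy)]
      have : ∀ h' ∈ H.erase h, a - (u * t + h') = h - h' := fun h' _ => by
        rw [hadef]; ring
      rw [Finset.prod_congr rfl this, hπ]
      refine Finset.prod_nbij' (fun x => h - x) (fun x => h - x) ?_ ?_ ?_ ?_ ?_
      · intro x hx
        rw [Finset.mem_erase] at hx ⊢
        exact ⟨sub_ne_zero.mpr (Ne.symm hx.1), hHsub h hh x hx.2⟩
      · intro x hx
        rw [Finset.mem_erase] at hx ⊢
        refine ⟨?_, hHsub h hh x hx.2⟩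
        intro h0
        exact hx.1 (by linear_combination -h0)
      · intro x hx; show h - (h - x) = x; ring
      · intro x hx; show h - (h - x) = x; ring
      · intro x hx; rfl
    rw [h1]
    -- second factor
    have h2 : (∏ u' ∈ U.erase u, ∏ b ∈ f u', (a - b)) =
        ∏ u' ∈ U.erase u, ((u - u') * c) := by
      refine Finset.prod_congr rfl ?_
      intro u' hu'
      rw [Finset.mem_erase] at hu'
      have : (∏ b ∈ f u', (a - b)) = ∏ h' ∈ H, ((u - u') * t + h - h') := by
        rw [hf]
        rw [Finset.prod_image (fun x _ y _ hxy => by simpa using hxy)]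
        refine Finset.prod_congr rfl (fun h' _ => by rw [hadef]; ring)
      rw [this, hLshift _ h hh,
        hLscale (u - u') (hKsub u (hUK hu) u' (hUK hu'.2)) (sub_ne_zero.mpr (Ne.symm hu'.1))]
    rw [Finset.prod_biUnion (fun x hx y hy hne =>
        hdisj x (Finset.mem_of_mem_erase hx) y (Finset.mem_of_mem_erase hy) hne), h2,
      Finset.prod_mul_distrib, Finset.prod_const, Finset.card_erase_of_mem hu]
    ring
  -- the Δ_U(u) factors are nonzero squares
  have hdelta : ∀ u ∈ U, ∃ w : F, w ≠ 0 ∧ (∏ u' ∈ U.erase u, (u - u')) = w * w := by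
    intro u hu
    have hmem : (∏ u' ∈ U.erase u, (u - u')) ∈ K :=
      Finset.prod_induction _ (· ∈ K) (fun a b ha hb => hKmul a ha b hb) hK1
        (fun u' hu' => hKsub u (hUK hu) u' (hUK (Finset.mem_of_mem_erase hu')))
    have hne : (∏ u' ∈ U.erase u, (u - u')) ≠ 0 := by
      rw [Finset.prod_ne_zero_iff]
      intro u' hu'
      rw [Finset.mem_erase] at hu'
      exact sub_ne_zero.mpr (Ne.symm hu'.1)
    obtain ⟨w, hw⟩ := hKsq _ hmem hne
    exact ⟨w, fun h0 => by simp [h0] at hw; exact hne hw, hw⟩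
  -- conclude
  rcases em (IsSquare (π * c ^ (U.card - 1))) with hsq | hsq
  · left
    intro a ha
    rw [hS, Finset.mem_biUnion] at ha
    obtain ⟨u, hu, ha⟩ := ha
    obtain ⟨h, hh, rfl⟩ := (hmemf u a).mp ha
    obtain ⟨w, hwne, hw⟩ := hdelta u hu
    rw [hmain u hu h hh, hw, isSquare_mul_sq_iff hwne]
    exact hsq
  · right
    intro a ha
    rw [hS, Finset.mem_biUnion] at ha
    obtain ⟨u, hu, ha⟩ := ha
    obtain ⟨h, hh, rfl⟩ := (hmemf u a).mp ha
    obtain ⟨w, hwne, hw⟩ := hdelta u hu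
    rw [hmain u hu h hh, hw, isSquare_mul_sq_iff hwne]
    exact hsq

open Polynomial in

private lemma card_K {F : Type*} [Field F] [Fintype F] [DecidableEq F]
    {p d : ℕ} (hp : 1 < p) (hd : d ≠ 0)
    (hdvd : p ^ d - 1 ∣ Fintype.card F - 1) :
    (Finset.univ.filter (fun x : F => x ^ p ^ d = x)).card = p ^ d := by
  classical
  set N := p ^ d - 1 with hN
  have hpd1 : 1 < p ^ d := Nat.one_lt_pow hd hp
  have hNpos : 0 < N := by omega
  have hq1 : 0 < Fintype.card F - 1 := by
    have := Fintype.one_lt_card (α := F)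
    omega
  apply le_antisymm
  · -- upper bound via roots
    have hsub : (Finset.univ.filter (fun x : F => x ^ p ^ d = x)) ⊆
        (X ^ p ^ d - X : F[X]).roots.toFinset := by
      intro x hx
      rw [Finset.mem_filter] at hx
      rw [Multiset.mem_toFinset, mem_roots (FiniteField.X_pow_card_pow_sub_X_ne_zero F hd hp)]
      simp [IsRoot, sub_eq_zero, hx.2]
    calc (Finset.univ.filter (fun x : F => x ^ p ^ d = x)).card
        ≤ (X ^ p ^ d - X : F[X]).roots.toFinset.card := Finset.card_le_card hsub
      _ ≤ Multiset.card (X ^ p ^ d - X : F[X]).roots := Multiset.toFinset_card_le _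
      _ ≤ (X ^ p ^ d - X : F[X]).natDegree := Polynomial.card_roots' _
      _ = p ^ d := FiniteField.X_pow_card_pow_sub_X_natDegree_eq F hd hp
  · -- lower bound via cyclic subgroup
    obtain ⟨g, hg⟩ := IsCyclic.exists_generator (α := Fˣ)
    have horder : orderOf g = Fintype.card F - 1 := by
      rw [orderOf_eq_card_of_forall_mem_zpowers hg, Nat.card_eq_fintype_card,
        Fintype.card_units]
    set M := (Fintype.card F - 1) / N with hM
    have hMdvd : M ∣ Fintype.card F - 1 := Nat.div_dvd_of_dvd hdvd
    have hMne : M ≠ 0 := by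
      rw [hM]
      exact Nat.div_ne_zero_iff.mpr ⟨by omega, Nat.le_of_dvd hq1 hdvd⟩
    have horderh : orderOf (g ^ M) = N := by
      rw [orderOf_pow' _ hMne, horder, Nat.gcd_eq_right hMdvd, Nat.div_div_self hdvd (by omega)]
    set T : Finset F := Finset.univ.image
      (fun x : (Subgroup.zpowers (g ^ M)) => ((x : Fˣ) : F)) with hT
    have hTcard : T.card = N := by
      rw [hT, Finset.card_image_of_injective _
        (fun a b hab => Subtype.ext (Units.ext hab)), Finset.card_univ, Fintype.card_zpowers,
        horderh]
    have h0T : (0 : F) ∉ T := by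
      rw [hT]
      simp only [Finset.mem_image]
      rintro ⟨x, -, hx⟩
      exact Units.ne_zero _ hx
    have hsub : insert (0:F) T ⊆ Finset.univ.filter (fun x : F => x ^ p ^ d = x) := by
      intro x hx
      rw [Finset.mem_insert] at hx
      rw [Finset.mem_filter]
      refine ⟨Finset.mem_univ _, ?_⟩
      rcases hx with rfl | hx
      · exact zero_pow (by positivity)
      · rw [hT, Finset.mem_image] at hx
        obtain ⟨y, -, rfl⟩ := hx
        have hy : (y : Fˣ) ^ N = 1 := by
          have := orderOf_dvd_of_mem_zpowers y.2
          rw [horderh] at this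
          exact orderOf_dvd_iff_pow_eq_one.mp this
        have : ((y : Fˣ) : F) ^ N = 1 := by
          rw [← Units.val_pow_eq_pow_val, hy, Units.val_one]
        calc ((y : Fˣ) : F) ^ p ^ d = ((y : Fˣ) : F) ^ (N + 1) := by rw [hN]; congr 1; omega
          _ = ((y : Fˣ) : F) ^ N * ((y : Fˣ) : F) := by rw [pow_succ]
          _ = ((y : Fˣ) : F) := by rw [this, one_mul]
    calc p ^ d = N + 1 := by omega
      _ = (insert (0:F) T).card := by rw [Finset.card_insert_of_notMem h0T, hTcard]
      _ ≤ _ := Finset.card_le_card hsub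


private lemma exists_H {F : Type*} [Field F] [Fintype F] [DecidableEq F]
    (K : Finset F) (hK2 : 1 < K.card)
    (hKsub : ∀ x ∈ K, ∀ y ∈ K, x - y ∈ K)
    (hKmul : ∀ x ∈ K, ∀ y ∈ K, x * y ∈ K)
    (hKinv : ∀ x ∈ K, x⁻¹ ∈ K)
    (j : ℕ) (hj : K.card ^ j ≤ Fintype.card F) :
    ∃ H : Finset F, H.card = K.card ^ j ∧ (0:F) ∈ H ∧
      (∀ x ∈ H, ∀ y ∈ H, x - y ∈ H) ∧ (∀ x ∈ K, ∀ h ∈ H, x * h ∈ H) := by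
  induction j with
  | zero =>
    exact ⟨{0}, by simp, by simp, by simp, fun x _ h hh => by
      rw [Finset.mem_singleton] at hh ⊢; rw [hh, mul_zero]⟩
  | succ j ih =>
    obtain ⟨H, hHcard, hH0, hHsub, hHsmul⟩ := ih
      (le_trans (Nat.pow_le_pow_right (by omega) (Nat.le_succ j)) hj)
    have hHlt : H.card < Fintype.card F := by
      have h1 : K.card ^ j < K.card ^ (j + 1) :=
        Nat.pow_lt_pow_right hK2 (Nat.lt_succ_self j)
      omega
    obtain ⟨t, ht⟩ : ∃ t : F, t ∉ H := by
      by_contra hcon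
      push_neg at hcon
      have : H = Finset.univ := Finset.eq_univ_iff_forall.mpr hcon
      rw [this, Finset.card_univ] at hHlt
      omega
    refine ⟨(H ×ˢ K).image (fun z => z.1 + z.2 * t), ?_, ?_, ?_, ?_⟩
    · rw [Finset.card_image_of_injOn, Finset.card_product, hHcard, pow_succ]
      intro z hz z' hz' heq
      simp only [Finset.mem_coe, Finset.mem_product] at hz hz'
      simp only at heq
      have hl : z.2 = z'.2 := by
        by_contra hne
        apply ht
        have h1 : (z.2 - z'.2) * t = z'.1 - z.1 := by linear_combination heq
        have h2 : (z.2 - z'.2)⁻¹ * ((z.2 - z'.2) * t) ∈ H := by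
          apply hHsmul _ (hKinv _ (hKsub _ hz.2 _ hz'.2))
          rw [h1]
          exact hHsub _ hz'.1 _ hz.1
        rwa [inv_mul_cancel_left₀ (sub_ne_zero.mpr hne)] at h2
      have : z.1 = z'.1 := by
        have := heq
        rw [hl] at this
        exact add_right_cancel this
      exact Prod.ext this hl
    · refine Finset.mem_image.mpr ⟨(0, 0), ?_, by simp⟩
      rw [Finset.mem_product]
      refine ⟨hH0, ?_⟩
      have h1 : ∃ x, x ∈ K := Finset.card_pos.mp (by omega)
      obtain ⟨x, hx⟩ := h1
      simpa using hKsub x hx x hx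
    · intro x hx y hy
      rw [Finset.mem_image] at hx hy ⊢
      obtain ⟨z, hz, rfl⟩ := hx
      obtain ⟨z', hz', rfl⟩ := hy
      simp only [Finset.mem_coe, Finset.mem_product] at hz hz'
      refine ⟨(z.1 - z'.1, z.2 - z'.2), ?_, by ring⟩
      rw [Finset.mem_product]
      exact ⟨hHsub _ hz.1 _ hz'.1, hKsub _ hz.2 _ hz'.2⟩
    · intro x hx h hh
      rw [Finset.mem_image] at hh ⊢
      obtain ⟨z, hz, rfl⟩ := hh
      rw [Finset.mem_product] at hz
      refine ⟨(x * z.1, x * z.2), ?_, by ring⟩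
      rw [Finset.mem_product]
      exact ⟨hHsmul _ hx _ hz.1, hKmul _ hx _ hz.2⟩


theorem stmt_6 (p m l : ℕ) (hp : p.Prime) (hodd : p ≠ 2) (hm : 0 < m)
    (hl1 : 1 ≤ l) (hl2 : l ≤ m)
    (r : ℕ) (hr : r = p ^ m)
    (F : Type*) [Field F] [Fintype F] [DecidableEq F] (hF : Fintype.card F = r ^ 2)
    (k : ℕ) (hke : Even k) (hk1 : 2 ≤ k) (hk2 : k ≤ p ^ Nat.gcd l m) :
    SigmaG F (k * p ^ l) := by
  classical
  set d := Nat.gcd l m with hd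
  have hd0 : 0 < d := Nat.gcd_pos_of_pos_left m hl1
  have hdl : d ∣ l := Nat.gcd_dvd_left l m
  have hdm : d ∣ m := Nat.gcd_dvd_right l m
  have hp1 : 1 < p := hp.one_lt
  have hq : Fintype.card F = p ^ (2 * m) := by
    rw [hF, hr, ← pow_mul, mul_comm]
  -- characteristic
  have hchar : ringChar F = p := by
    obtain ⟨n, hn1, hn2⟩ := FiniteField.card F (ringChar F)
    have h1 : ringChar F ∣ p ^ (2 * m) := by
      rw [← hq, hn2]
      exact dvd_pow_self _ (by positivity)
    exact (Nat.prime_dvd_prime_iff_eq hn1 hp).mp (hn1.dvd_of_dvd_pow h1)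
  haveI : CharP F p := hchar ▸ ringChar.charP F
  haveI : Fact p.Prime := ⟨hp⟩
  -- the subfield K (as a Finset)
  set K : Finset F := Finset.univ.filter (fun x : F => x ^ p ^ d = x) with hK
  have hmemK : ∀ x : F, x ∈ K ↔ x ^ p ^ d = x := by
    intro x; rw [hK, Finset.mem_filter]; simp
  have hK0 : (0:F) ∈ K := by rw [hmemK]; exact zero_pow (by positivity)
  have hK1 : (1:F) ∈ K := by rw [hmemK]; exact one_pow _
  have hKsub : ∀ x ∈ K, ∀ y ∈ K, x - y ∈ K := by
    intro x hx y hy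
    rw [hmemK] at hx hy ⊢
    rw [sub_pow_char_pow, hx, hy]
  have hKmul : ∀ x ∈ K, ∀ y ∈ K, x * y ∈ K := by
    intro x hx y hy
    rw [hmemK] at hx hy ⊢
    rw [mul_pow, hx, hy]
  have hKinv : ∀ x ∈ K, x⁻¹ ∈ K := by
    intro x hx
    rw [hmemK] at hx ⊢
    rw [inv_pow, hx]
  -- cardinality of K
  have hdvd2m : d ∣ 2 * m := Dvd.dvd.mul_left hdm 2
  have hdvdcard : p ^ d - 1 ∣ Fintype.card F - 1 := by
    obtain ⟨e2, he2⟩ := hdvd2m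
    rw [hq, he2, pow_mul]
    simpa using Nat.sub_dvd_pow_sub_pow (p ^ d) 1 e2
  have hKcard : K.card = p ^ d := card_K hp1 (by omega) hdvdcard
  -- squares in K
  have hKsqrt : ∀ x ∈ K, x ≠ 0 → IsSquare x := by
    intro x hx hxne
    rw [hmemK] at hx
    have hxN : x ^ (p ^ d - 1) = 1 := by
      have h1 : x ^ (p ^ d - 1) * x = 1 * x := by
        rw [one_mul, ← pow_succ]
        have : p ^ d - 1 + 1 = p ^ d := by
          have : 1 ≤ p ^ d := Nat.one_le_pow _ _ (by omega)
          omega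
        rw [this, hx]
      exact mul_right_cancel₀ hxne h1
    -- arithmetic: card F / 2 is a multiple of p ^ d - 1
    obtain ⟨e1, he1⟩ := hdm
    have hw : p ^ d - 1 ∣ p ^ m - 1 := by
      rw [he1, pow_mul]
      simpa using Nat.sub_dvd_pow_sub_pow (p ^ d) 1 e1
    obtain ⟨t, ht⟩ := hw
    set w := p ^ m - 1 with hwdef
    have hwodd : Odd (p ^ m) := (hp.odd_of_ne_two hodd).pow
    obtain ⟨v, hv⟩ : ∃ v, w = 2 * v := by
      obtain ⟨c, hc⟩ := hwodd
      exact ⟨c, by omega⟩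
    have hpm1 : 1 ≤ p ^ m := Nat.one_le_pow _ _ (by omega)
    have hcard1 : Fintype.card F = w * (w + 2) + 1 := by
      rw [hq, two_mul, pow_add]
      have h2 : p ^ m = w + 1 := by omega
      rw [h2]; ring
    set A := (p ^ d - 1) * (t * (v + 1)) with hA
    have hAw : A = w * (v + 1) := by
      rw [hA, ← mul_assoc, ← ht]
    have hcard2 : Fintype.card F = 2 * A + 1 := by
      rw [hcard1, hAw]
      have h3 : w * (w + 2) = 2 * (w * (v + 1)) := by rw [hv]; ring
      rw [h3]
    have hhalf : Fintype.card F / 2 = A := by omega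
    rw [FiniteField.isSquare_iff (by rw [hchar]; exact hodd) hxne, hhalf, hA, pow_mul, hxN,
      one_pow]
  -- x ^ (p ^ l) = x on K
  have hKpowl : ∀ x ∈ K, x ^ p ^ l = x := by
    have key : ∀ e : ℕ, ∀ x : F, x ^ p ^ d = x → x ^ p ^ (d * e) = x := by
      intro e
      induction e with
      | zero => intro x _; simp
      | succ e ih =>
        intro x hx
        rw [Nat.mul_succ, pow_add, pow_mul, ih x hx, hx]
    intro x hx
    obtain ⟨e, he⟩ := hdl
    rw [he]
    exact key e x ((hmemK x).mp hx)
  -- construct H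
  obtain ⟨H, hHcard, hH0, hHsub, hHsmul⟩ := exists_H K
    (by rw [hKcard]; exact Nat.one_lt_pow (by omega) hp1) hKsub hKmul hKinv (l / d)
    (by rw [hKcard, ← pow_mul, Nat.mul_div_cancel' hdl, hq]
        exact Nat.pow_le_pow_right (by omega) (by omega))
  have hHcard' : H.card = p ^ l := by
    rw [hHcard, hKcard, ← pow_mul, Nat.mul_div_cancel' hdl]
  -- pick t outside H
  obtain ⟨t, ht⟩ : ∃ t : F, t ∉ H := by
    by_contra hcon
    push_neg at hcon
    have h1 : H = Finset.univ := Finset.eq_univ_iff_forall.mpr hcon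
    have h2 : p ^ l < p ^ (2 * m) := Nat.pow_lt_pow_right hp1 (by omega)
    rw [h1, Finset.card_univ, hq] at hHcard'
    omega
  -- pick U
  obtain ⟨U, hUK, hUcard⟩ : ∃ U ⊆ K, U.card = k := by
    apply Finset.exists_subset_card_eq
    rw [hKcard]; exact hk2
  -- apply the construction
  obtain ⟨S, hScard, hSsq⟩ := construction K H U t hK1 hKsub hKmul hKinv
    (by rw [hHcard']; exact hKpowl) hKsqrt hH0 hHsub hHsmul ht hUK
  refine ⟨hke.mul_right _, ?_, S, by rw [hScard, hUcard, hHcard'], hSsq⟩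
  calc 2 ≤ k := hk1
    _ = k * 1 := (mul_one k).symm
    _ ≤ k * p ^ l := Nat.mul_le_mul_left k (Nat.one_le_pow _ _ (by omega))
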